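/- The weighted sum Σ_{k=0}^{n} (n−k) x_k(t) equals n·(2 − e^{−βt/n})^{n−1}·e^{−βt/n} for all t ≥ 0. -/

import Mathlib

noncomputable def lam (n : ℕ) (β : ℝ) (k : ℕ) : ℝ := β * ((n : ℝ) - k) / n

noncomputable def yfun (n : ℕ) (β : ℝ) (k : ℕ) (t : ℝ) : ℝ :=
  (n.choose k : ℝ) * Real.exp (-β * t / n) ^ (n - k) * (2 * (1 - Real.exp (-β * t / n))) ^ k

lemma expDeriv (n : ℕ) (β : ℝ) (t : ℝ) :
    HasDerivAt (fun s : ℝ => Real.exp (-β * s / n)) (-β / n * Real.exp (-β * t / n)) t := by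
  have h : HasDerivAt (fun s : ℝ => -β * s / n) (-β / n) t := by
    simpa [mul_div_assoc] using ((hasDerivAt_id t).const_mul (-β)).div_const (n : ℝ)
  simpa [mul_comm] using h.exp

lemma ode_zero (c : ℝ) (f : ℝ → ℝ) (hf : ∀ t, HasDerivAt f (-c * f t) t) (h0 : f 0 = 0)
    (t : ℝ) : f t = 0 := by
  set g : ℝ → ℝ := fun s => Real.exp (c * s) * f s with hg
  have hg' : ∀ s, HasDerivAt g 0 s := by
    intro s
    have h1 : HasDerivAt (fun s : ℝ => Real.exp (c * s)) (Real.exp (c * s) * c) s := by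
      simpa using ((hasDerivAt_id s).const_mul c).exp
    have h2 := h1.mul (hf s)
    exact h2.congr_deriv (by ring)
  have hconst : g t = g 0 :=
    is_const_of_deriv_eq_zero (fun s => (hg' s).differentiableAt) (fun s => (hg' s).deriv) t 0
  have : Real.exp (c * t) * f t = 0 := by simpa [hg, h0] using hconst
  have hne := (Real.exp_pos (c * t)).ne'
  exact (mul_eq_zero.mp this).resolve_left hne

lemma pow_helper (a : ℝ) (m : ℕ) : (m : ℝ) * a ^ (m - 1) * a = m * a ^ m := by
  cases m with
  | zero => simp
  | succ s => rw [Nat.add_sub_cancel, pow_succ]; ring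

lemma yfunDeriv (n : ℕ) (β : ℝ) (k : ℕ) (t : ℝ) :
    HasDerivAt (yfun n β k)
      ((n.choose k : ℝ) * (((n - k : ℕ) : ℝ) * Real.exp (-β * t / n) ^ (n - k - 1)
          * (-β / n * Real.exp (-β * t / n))) * (2 * (1 - Real.exp (-β * t / n))) ^ k
        + (n.choose k : ℝ) * Real.exp (-β * t / n) ^ (n - k)
          * ((k : ℝ) * (2 * (1 - Real.exp (-β * t / n))) ^ (k - 1)
            * (2 * (β / n * Real.exp (-β * t / n))))) t := by
  have ha := expDeriv n β t
  have hb : HasDerivAt (fun s : ℝ => 2 * (1 - Real.exp (-β * s / n)))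
      (2 * (β / n * Real.exp (-β * t / n))) t := by
    have := (ha.const_sub 1).const_mul 2
    exact this.congr_deriv (by ring)
  have h1 := (ha.pow (n - k)).const_mul ((n.choose k : ℝ))
  have h2 := hb.pow k
  exact h1.mul h2

lemma yfunDeriv0 (n : ℕ) (hn : 1 ≤ n) (β : ℝ) (t : ℝ) :
    HasDerivAt (yfun n β 0) (-(lam n β 0) * yfun n β 0 t) t := by
  have h := yfunDeriv n β 0 t
  have hn0 : (n : ℝ) ≠ 0 := Nat.cast_ne_zero.mpr (by omega)
  convert h using 1
  set a := Real.exp (-β * t / n) with ha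
  have hp := pow_helper a n
  simp only [yfun, lam, Nat.choose_zero_right, Nat.cast_zero, Nat.cast_one, pow_zero,
    Nat.sub_zero, one_mul, mul_one, zero_mul, mul_zero, add_zero, sub_zero]
  linear_combination (β / (n : ℝ)) * hp

lemma yfunDerivS (n : ℕ) (β : ℝ) (k : ℕ) (hk : 1 ≤ k) (hkn : k ≤ n) (t : ℝ) :
    HasDerivAt (yfun n β k)
      (2 * lam n β (k - 1) * yfun n β (k - 1) t - lam n β k * yfun n β k t) t := by
  have h := yfunDeriv n β k t
  have hn0 : (n : ℝ) ≠ 0 := Nat.cast_ne_zero.mpr (by omega)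
  convert h using 1
  obtain ⟨j, rfl⟩ : ∃ j, k = j + 1 := ⟨k - 1, by omega⟩
  set a := Real.exp (-β * t / n) with ha
  set b := (2 * (1 - a)) with hb
  have hp := pow_helper a (n - (j + 1))
  have hnj : n - j = (n - (j + 1)) + 1 := by omega
  have hC : ((n.choose (j + 1) : ℝ) * (j + 1) = (n.choose j : ℝ) * ((n : ℝ) - j)) := by
    have := Nat.choose_succ_right_eq n j
    have hcast : ((n.choose (j+1) * (j+1) : ℕ) : ℝ) = ((n.choose j * (n - j) : ℕ) : ℝ) := by
      exact_mod_cast congrArg (Nat.cast : ℕ → ℝ) this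
    push_cast [Nat.cast_sub (by omega : j ≤ n)] at hcast
    linarith [hcast]
  have hcastnk : ((n - (j+1) : ℕ) : ℝ) = (n : ℝ) - (j + 1) := by
    push_cast [Nat.cast_sub (by omega : j + 1 ≤ n)]; ring
  simp only [yfun, lam, Nat.add_sub_cancel, hnj, pow_succ]
  push_cast
  linear_combination (-(2 * β / (n:ℝ) * a ^ (n - (j+1)) * a * b ^ j)) * hC
    + (β / (n:ℝ) * (n.choose (j+1) : ℝ) * b ^ j * b) * hp
    + (β / (n:ℝ) * (n.choose (j+1) : ℝ) * b ^ j * b * a ^ (n - (j+1))) * hcastnk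

lemma natid (n : ℕ) (hn : 1 ≤ n) (k : ℕ) : (n - k) * n.choose k = n * (n - 1).choose k := by
  obtain ⟨m, rfl⟩ : ∃ m, n = m + 1 := ⟨n - 1, by omega⟩
  simp only [Nat.add_sub_cancel]
  calc (m + 1 - k) * (m + 1).choose k = (m + 1).choose k * (m + 1 - k) := mul_comm _ _
    _ = (m + 1).choose (k + 1) * (k + 1) := (Nat.choose_succ_right_eq (m + 1) k).symm
    _ = (m + 1) * m.choose k := by
        have := Nat.add_one_mul_choose_eq m k
        omega

lemma sum_yfun (n : ℕ) (hn : 1 ≤ n) (β : ℝ) (s : ℝ) :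
    ∑ k ∈ Finset.range (n + 1), ((n : ℝ) - k) * yfun n β k s
      = n * (2 - Real.exp (-β * s / n)) ^ (n - 1) * Real.exp (-β * s / n) := by
  set a := Real.exp (-β * s / n) with ha
  set b := (2 * (1 - a)) with hb
  have hstep : ∀ k ∈ Finset.range (n + 1), ((n : ℝ) - k) * yfun n β k s
      = ((n * (n - 1).choose k : ℕ) : ℝ) * a ^ (n - k) * b ^ k := by
    intro k hk
    rw [Finset.mem_range] at hk
    have hkn : k ≤ n := by omega
    have h1 : ((n : ℝ) - k) = ((n - k : ℕ) : ℝ) := by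
      push_cast [Nat.cast_sub hkn]; ring
    rw [yfun, h1, ← natid n hn k]
    push_cast
    ring
  rw [Finset.sum_congr rfl hstep, Finset.sum_range_succ,
    Nat.choose_eq_zero_of_lt (by omega : n - 1 < n)]
  simp only [Nat.mul_zero, Nat.cast_zero, zero_mul, add_zero]
  have hstep2 : ∀ k ∈ Finset.range n, ((n * (n - 1).choose k : ℕ) : ℝ) * a ^ (n - k) * b ^ k
      = ((n : ℝ) * a) * (b ^ k * a ^ (n - 1 - k) * ((n - 1).choose k : ℝ)) := by
    intro k hk
    rw [Finset.mem_range] at hk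
    have h2 : n - k = (n - 1 - k) + 1 := by omega
    rw [h2, pow_succ]
    push_cast
    ring
  rw [Finset.sum_congr rfl hstep2, ← Finset.mul_sum]
  have hr : Finset.range n = Finset.range ((n - 1) + 1) := by congr 1; omega
  rw [hr, ← add_pow b a (n - 1)]
  have hba : b + a = 2 - a := by rw [hb]; ring
  rw [hba]
  ring

/-- Σ_{k=0}^n (n−k) x_k(t) = n·(2 − e^{−βt/n})^{n−1}·e^{−βt/n}. -/
theorem weighted_sum (n : ℕ) (hn : 1 ≤ n) (β : ℝ) (hβ : 0 < β)
    (x : ℕ → ℝ → ℝ)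
    (hderiv0 : ∀ t : ℝ, HasDerivAt (x 0) (-(lam n β 0) * x 0 t) t)
    (hinit0 : x 0 0 = 1)
    (hderiv : ∀ k, 1 ≤ k → k ≤ n → ∀ t : ℝ,
      HasDerivAt (x k) (2 * lam n β (k - 1) * x (k - 1) t - lam n β k * x k t) t)
    (hinit : ∀ k, 1 ≤ k → k ≤ n → x k 0 = 0) :
    ∀ t : ℝ, 0 ≤ t →
      ∑ k ∈ Finset.range (n + 1), ((n : ℝ) - k) * x k t
        = n * (2 - Real.exp (-β * t / n)) ^ (n - 1) * Real.exp (-β * t / n) := by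
  have key : ∀ k, k ≤ n → ∀ s : ℝ, x k s = yfun n β k s := by
    intro k
    induction k with
    | zero =>
      intro _ s
      have hz : ∀ u : ℝ, HasDerivAt (fun v => x 0 v - yfun n β 0 v)
          (-(lam n β 0) * (x 0 u - yfun n β 0 u)) u := by
        intro u
        have h := (hderiv0 u).sub (yfunDeriv0 n hn β u)
        exact h.congr_deriv (by ring)
      have h0 : x 0 0 - yfun n β 0 0 = 0 := by
        simp [yfun, hinit0]
      have := ode_zero (lam n β 0) _ hz h0 s
      linarith [this]
    | succ j ih =>
      intro hjn s
      have hxj : ∀ u : ℝ, x j u = yfun n β j u := ih (by omega)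
      have hz : ∀ u : ℝ, HasDerivAt (fun v => x (j + 1) v - yfun n β (j + 1) v)
          (-(lam n β (j + 1)) * (x (j + 1) u - yfun n β (j + 1) u)) u := by
        intro u
        have h1 := hderiv (j + 1) (by omega) hjn u
        have h2 := yfunDerivS n β (j + 1) (by omega) hjn u
        have h := h1.sub h2
        simp only [Nat.add_sub_cancel] at h
        exact h.congr_deriv (by rw [hxj u]; ring)
      have h0 : x (j + 1) 0 - yfun n β (j + 1) 0 = 0 := by
        rw [hinit (j + 1) (by omega) hjn]
        simp [yfun]
      have := ode_zero (lam n β (j + 1)) _ hz h0 s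
      linarith [this]
  intro t _
  have hx : ∑ k ∈ Finset.range (n + 1), ((n : ℝ) - k) * x k t
      = ∑ k ∈ Finset.range (n + 1), ((n : ℝ) - k) * yfun n β k t := by
    refine Finset.sum_congr rfl fun k hk => ?_
    rw [Finset.mem_range] at hk
    rw [key k (by omega) t]
  rw [hx, sum_yfun n hn β t]
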